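/- If G₁ and G₂ are graphs on the same n vertices both diagonalized by the same Hadamard matrix H of order n, then the merge, whose Laplacian is L₃ = [[w₁L₁ + w₂D₂, −w₂A₂],[−w₂A₂, w₁L₁ + w₂D₂]] (where L₂ = D₂ − A₂), is diagonalized by the Hadamard matrix [[H,H],[H,−H]] of order 2n; moreover if L₁, L₂ have eigenvalue matrices Λ₁, Λ₂ and G₂ is d₂-regular (D₂ = d₂I), the eigenvalue matrix of L₃ is diag(w₁Λ₁ + w₂Λ₂, w₁Λ₁ − w₂Λ₂ + 2w₂d₂I). -/
import Mathlib

open Matrix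

theorem merge_hadamard_diagonalizable (n : ℕ)
    (H : Matrix (Fin n) (Fin n) ℝ)
    (hent : ∀ i j, H i j = 1 ∨ H i j = -1)
    (hH : H * Hᵀ = (n : ℝ) • 1)
    (L₁ L₂ A₂ : Matrix (Fin n) (Fin n) ℝ) (d₂ w₁ w₂ : ℝ)
    (Λ₁ Λ₂ : Fin n → ℝ)
    (hL₁ : L₁ = ((n : ℝ))⁻¹ • (H * Matrix.diagonal Λ₁ * Hᵀ))
    (hL₂ : L₂ = ((n : ℝ))⁻¹ • (H * Matrix.diagonal Λ₂ * Hᵀ))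
    (hreg : L₂ = d₂ • (1 : Matrix (Fin n) (Fin n) ℝ) - A₂) :
    Matrix.fromBlocks
        (w₁ • L₁ + (w₂ * d₂) • (1 : Matrix (Fin n) (Fin n) ℝ)) (-(w₂ • A₂))
        (-(w₂ • A₂)) (w₁ • L₁ + (w₂ * d₂) • (1 : Matrix (Fin n) (Fin n) ℝ)) =
      ((2 * n : ℝ))⁻¹ • ((Matrix.fromBlocks H H H (-H)) *
        Matrix.diagonal (Sum.elim
          (fun ℓ => w₁ * Λ₁ ℓ + w₂ * Λ₂ ℓ)
          (fun ℓ => w₁ * Λ₁ ℓ - w₂ * Λ₂ ℓ + 2 * w₂ * d₂)) *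
        (Matrix.fromBlocks H H H (-H))ᵀ) := by
  rcases Nat.eq_zero_or_pos n with rfl | hn
  · exact Subsingleton.elim _ _
  have hn' : (n : ℝ) ≠ 0 := Nat.cast_ne_zero.2 hn.ne'
  have h1 : H * Matrix.diagonal Λ₁ * Hᵀ = (n : ℝ) • L₁ := by
    rw [hL₁, smul_smul, mul_inv_cancel₀ hn', one_smul]
  have h2 : H * Matrix.diagonal Λ₂ * Hᵀ = (n : ℝ) • L₂ := by
    rw [hL₂, smul_smul, mul_inv_cancel₀ hn', one_smul]
  have hA : A₂ = d₂ • (1 : Matrix (Fin n) (Fin n) ℝ) - L₂ := by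
    rw [hreg]; abel
  have hd₁ : Matrix.diagonal (fun ℓ => w₁ * Λ₁ ℓ + w₂ * Λ₂ ℓ)
      = w₁ • Matrix.diagonal Λ₁ + w₂ • Matrix.diagonal Λ₂ := by
    rw [← Matrix.diagonal_smul, ← Matrix.diagonal_smul, Matrix.diagonal_add]
    rfl
  have hd₂ : Matrix.diagonal (fun ℓ => w₁ * Λ₁ ℓ - w₂ * Λ₂ ℓ + 2 * w₂ * d₂)
      = w₁ • Matrix.diagonal Λ₁ - w₂ • Matrix.diagonal Λ₂
        + (2 * w₂ * d₂) • (1 : Matrix (Fin n) (Fin n) ℝ) := by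
    ext i j
    by_cases h : i = j <;>
      simp [Matrix.diagonal_apply, Matrix.one_apply, h, sub_mul, mul_comm]
  have key₁ : H * Matrix.diagonal (fun ℓ => w₁ * Λ₁ ℓ + w₂ * Λ₂ ℓ) * Hᵀ
      = (w₁ * n) • L₁ + (w₂ * n) • L₂ := by
    rw [hd₁, Matrix.mul_add, Matrix.add_mul, Matrix.mul_smul, Matrix.mul_smul,
      Matrix.smul_mul, Matrix.smul_mul, h1, h2, smul_smul, smul_smul]
  have key₂ : H * Matrix.diagonal (fun ℓ => w₁ * Λ₁ ℓ - w₂ * Λ₂ ℓ + 2 * w₂ * d₂) * Hᵀ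
      = (w₁ * n) • L₁ - (w₂ * n) • L₂ + (2 * w₂ * d₂ * n) • (1 : Matrix (Fin n) (Fin n) ℝ) := by
    rw [hd₂, mul_add, add_mul, mul_sub, sub_mul,
      Matrix.mul_smul, Matrix.mul_smul, Matrix.mul_smul,
      Matrix.smul_mul, Matrix.smul_mul, Matrix.smul_mul, Matrix.mul_one,
      h1, h2, hH, smul_smul, smul_smul, smul_smul]
  rw [← Matrix.fromBlocks_diagonal, Matrix.fromBlocks_transpose,
    Matrix.fromBlocks_multiply, Matrix.fromBlocks_multiply, Matrix.fromBlocks_smul,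
    Matrix.fromBlocks_inj]
  simp only [Matrix.mul_zero, Matrix.zero_mul, add_zero, zero_add,
    Matrix.neg_mul, Matrix.mul_neg, neg_neg, transpose_neg]
  have e₁ : w₁ • L₁ + (w₂ * d₂) • (1 : Matrix (Fin n) (Fin n) ℝ)
      = (2 * (n : ℝ))⁻¹ • (H * Matrix.diagonal (fun ℓ => w₁ * Λ₁ ℓ + w₂ * Λ₂ ℓ) * Hᵀ
        + H * Matrix.diagonal (fun ℓ => w₁ * Λ₁ ℓ - w₂ * Λ₂ ℓ + 2 * w₂ * d₂) * Hᵀ) := by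
    rw [key₁, key₂]
    match_scalars <;> field_simp <;> ring
  have e₂ : -(w₂ • A₂)
      = (2 * (n : ℝ))⁻¹ • (H * Matrix.diagonal (fun ℓ => w₁ * Λ₁ ℓ + w₂ * Λ₂ ℓ) * Hᵀ
        - H * Matrix.diagonal (fun ℓ => w₁ * Λ₁ ℓ - w₂ * Λ₂ ℓ + 2 * w₂ * d₂) * Hᵀ) := by
    rw [key₁, key₂, hA]
    match_scalars <;> field_simp <;> ring
  exact ⟨e₁, by rw [e₂, sub_eq_add_neg], by rw [e₂, sub_eq_add_neg], e₁⟩
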